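/- Let P and Q be real n×n cyclic Hankel matrices. Then the commutator R = PQ − QP is skew-symmetric and cyclic Toeplitz; in particular R(i,j) depends only on (j−i) mod n and Rᵀ = −R. -/

import Mathlib

open Matrix

/-- For cyclic Hankel matrices `P, Q`, the commutator `R = PQ − QP` is
skew-symmetric and cyclic Toeplitz: `Rᵀ = −R` and `R i j` depends only on `j − i` (mod n). -/
theorem cyclic_hankel_commutator_structure (n : ℕ) [NeZero n] (p q : Fin n → ℝ)
    (P Q : Matrix (Fin n) (Fin n) ℝ)
    (hP : ∀ i j, P i j = p (i + j))
    (hQ : ∀ i j, Q i j = q (i + j)) :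
    (P * Q - Q * P)ᵀ = -(P * Q - Q * P) ∧
    ∀ i j i' j' : Fin n, j - i = j' - i' →
      (P * Q - Q * P) i j = (P * Q - Q * P) i' j' := by
  have hPs : Pᵀ = P := by
    ext i j; simp [transpose_apply, hP, add_comm]
  have hQs : Qᵀ = Q := by
    ext i j; simp [transpose_apply, hQ, add_comm]
  constructor
  · rw [transpose_sub, transpose_mul, transpose_mul, hPs, hQs, neg_sub]
  · intro i j i' j' h
    have hi : i' = i + (i' - i) := by abel
    have hj : j' = j + (i' - i) := by
      have h2 : j' = j - i + i' := eq_add_of_sub_eq h.symm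
      rw [h2]; abel
    rw [hi, hj]
    simp only [Matrix.sub_apply, Matrix.mul_apply, hP, hQ]
    congr 1
    · refine Fintype.sum_equiv (Equiv.subRight (i' - i))
        (fun x => p (i + x) * q (x + j))
        (fun x => p (i + (i' - i) + x) * q (x + (j + (i' - i)))) (fun x => ?_)
      simp only [Equiv.subRight_apply]
      congr 1 <;> congr 1 <;> abel
    · refine Fintype.sum_equiv (Equiv.subRight (i' - i))
        (fun x => q (i + x) * p (x + j))
        (fun x => q (i + (i' - i) + x) * p (x + (j + (i' - i)))) (fun x => ?_)
      simp only [Equiv.subRight_apply]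
      congr 1 <;> congr 1 <;> abel
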